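/- Let n ≥ 1 be an integer, let t, s ∈ {0,1}^n, and for (a,b) ∈ {0,1}^2 let μ_{a,b} = (1/n)·|{i : (t_i, s_i) = (a,b)}| be the relative frequency of the pair (a,b). Let w_e be a real number with 3/4 < w_e ≤ (2+√2)/4 and set Δ = w_e − 1/2 − (1/4)(√2·μ_{0,0} − μ_{0,1} + μ_{1,0}). Then there exists a real number γ ≥ 0 such that, defining ξ_{0,0} = e^{−γ w_e}[(e^{γ} − 1)·(2+√2)/4 + 1], ξ_{1,0} = e^{−γ w_e}(3e^{γ} + 1)/4, ξ_{0,1} = e^{−γ w_e}(3 + e^{γ})/4, and ξ_{1,1} = e^{−γ w_e}(1 + e^{γ})/2, one has Σ_{a,b ∈ {0,1}} μ_{a,b}·ξ_{a,b} − 1 ≤ −Δ² if Δ ≥ 0, and Σ_{a,b ∈ {0,1}} μ_{a,b}·ξ_{a,b} − 1 ≤ 0 if Δ < 0. -/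

import Mathlib

lemma h0_bd (w : ℝ) (hw1 : 3/4 ≤ w) (hw2 : w ≤ 0.8536) :
    0.26 ≤ 55/32 - 117/32*w + 261/32*w^2 - 189/16*w^3 + 3375/512*w^4 + 81/64*w^5 - 81/32*w^6 := by
  nlinarith [sq_nonneg (w - 3/4), sq_nonneg (w - 0.8), sq_nonneg (w - 0.8536),
    mul_nonneg (sub_nonneg.2 hw1) (sub_nonneg.2 hw2), sq_nonneg ((w-3/4)*(w-0.8536)),
    mul_nonneg (mul_nonneg (sub_nonneg.2 hw1) (sub_nonneg.2 hw2)) (sq_nonneg (w-0.8)),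
    mul_nonneg (mul_nonneg (sub_nonneg.2 hw1) (sub_nonneg.2 hw2)) (sq_nonneg w),
    mul_nonneg (mul_nonneg (sub_nonneg.2 hw1) (sub_nonneg.2 hw2)) (mul_nonneg (sub_nonneg.2 hw1) (sub_nonneg.2 hw2))]

lemma h1_bd (w : ℝ) (hw1 : 3/4 ≤ w) (hw2 : w ≤ 0.8536) :
    0.8 ≤ 9/4 - 99/4*w + 243/4*w^2 - 99/2*w^3 + 1017/128*w^4 + 27/8*w^5 + 27/8*w^6 := by
  nlinarith [sq_nonneg (w - 3/4), sq_nonneg (w - 0.8), sq_nonneg (w - 0.8536),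
    mul_nonneg (sub_nonneg.2 hw1) (sub_nonneg.2 hw2), sq_nonneg ((w-3/4)*(w-0.8536)),
    mul_nonneg (mul_nonneg (sub_nonneg.2 hw1) (sub_nonneg.2 hw2)) (sq_nonneg (w-0.8)),
    mul_nonneg (mul_nonneg (sub_nonneg.2 hw1) (sub_nonneg.2 hw2)) (sq_nonneg w),
    mul_nonneg (mul_nonneg (sub_nonneg.2 hw1) (sub_nonneg.2 hw2)) (mul_nonneg (sub_nonneg.2 hw1) (sub_nonneg.2 hw2))]

lemma h2_bd (w : ℝ) (hw1 : 3/4 ≤ w) (hw2 : w ≤ 0.8536) :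
    -0.7 ≤ 27/2 - 81/2*w + 81/2*w^2 - 9*w^3 - 27/32*w^4 - 27/4*w^5 := by
  nlinarith [sq_nonneg (w - 3/4), sq_nonneg (w - 0.8), sq_nonneg (w - 0.8536),
    mul_nonneg (sub_nonneg.2 hw1) (sub_nonneg.2 hw2), sq_nonneg ((w-3/4)*(w-0.8536)),
    mul_nonneg (mul_nonneg (sub_nonneg.2 hw1) (sub_nonneg.2 hw2)) (sq_nonneg (w-0.8)),
    mul_nonneg (mul_nonneg (sub_nonneg.2 hw1) (sub_nonneg.2 hw2)) (sq_nonneg w),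
    mul_nonneg (mul_nonneg (sub_nonneg.2 hw1) (sub_nonneg.2 hw2)) (mul_nonneg (sub_nonneg.2 hw1) (sub_nonneg.2 hw2))]

set_option maxHeartbeats 1000000 in
lemma key_poly (w D : ℝ) (hw1 : 3/4 ≤ w) (hw2 : w ≤ 0.8536)
    (hD0 : 0 ≤ D) (hD1 : D ≤ w - 1/4) :
    (w - D) * (1 + (3*D*(1-w)) + (3*D*(1-w))^2/2 + (3*D*(1-w))^3/2)
    + (1 - w + D) * (1 - (3*D*w) + (3*D*w)^2/2 - (3*D*w)^3/6 + (3*D*w)^4/24)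
    ≤ 1 - D^2 := by
  obtain ⟨e, rfl⟩ : ∃ e, D = w - 1/4 - e := ⟨w - 1/4 - D, by ring⟩
  have he0 : 0 ≤ e := by linarith
  have he1 : e ≤ 0.6036 := by linarith
  have hDD : (0:ℝ) ≤ (w - 1/4 - e)^2 := sq_nonneg _
  have R0 : 0 ≤ (w - 1/4 - e)^2 * ((55/32 - 117/32*w + 261/32*w^2 - 189/16*w^3
      + 3375/512*w^4 + 81/64*w^5 - 81/32*w^6) - 0.26) :=
    mul_nonneg hDD (by linarith [h0_bd w hw1 hw2])
  have R1 : 0 ≤ ((w - 1/4 - e)^2 * e) * ((9/4 - 99/4*w + 243/4*w^2 - 99/2*w^3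
      + 1017/128*w^4 + 27/8*w^5 + 27/8*w^6) - 0.8) :=
    mul_nonneg (mul_nonneg hDD he0) (by linarith [h1_bd w hw1 hw2])
  have R2 : 0 ≤ ((w - 1/4 - e)^2 * e^2) * ((27/2 - 81/2*w + 81/2*w^2 - 9*w^3
      - 27/32*w^4 - 27/4*w^5) + 0.7) :=
    mul_nonneg (mul_nonneg hDD (sq_nonneg e)) (by linarith [h2_bd w hw1 hw2])
  have R3 : 0 ≤ ((w - 1/4 - e)^2 * e^3) * (27/8*w^4) := by positivity
  have R4 : 0 ≤ (w - 1/4 - e)^2 * (e * (0.8 - 0.7*e)) :=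
    mul_nonneg hDD (mul_nonneg he0 (by linarith))
  have R5 : 0 ≤ (w - 1/4 - e)^2 * 0.26 := by positivity
  linarith [R0, R1, R2, R3, R4, R5]

lemma exp_cubic_bd {x : ℝ} (h0 : 0 ≤ x) (h1 : x ≤ 1) :
    Real.exp x ≤ 1 + x + x^2/2 + x^3/2 := by
  have h := Real.exp_bound' h0 h1 (n := 3) (by norm_num)
  simp [Finset.sum_range_succ, Nat.factorial] at h
  have hx3 : 0 ≤ x^3 := by positivity
  nlinarith [h]

lemma exp_neg_quartic_bd {b : ℝ} (hb : 0 ≤ b) :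
    Real.exp (-b) ≤ 1 - b + b^2/2 - b^3/6 + b^4/24 := by
  have h := Real.sum_le_exp_of_nonneg hb 5
  simp [Finset.sum_range_succ, Nat.factorial] at h
  have hP : (0:ℝ) < 1 + b + b^2/2 + b^3/6 + b^4/24 := by positivity
  have hPe : 1 + b + b^2/2 + b^3/6 + b^4/24 ≤ Real.exp b := by nlinarith [h]
  have h1 : Real.exp (-b) ≤ 1 / (1 + b + b^2/2 + b^3/6 + b^4/24) := by
    rw [Real.exp_neg, inv_eq_one_div]
    exact one_div_le_one_div_of_le hP hPe
  have h2 : 1 / (1 + b + b^2/2 + b^3/6 + b^4/24) ≤ 1 - b + b^2/2 - b^3/6 + b^4/24 := by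
    rw [div_le_iff₀ hP]
    nlinarith [pow_nonneg hb 6, pow_nonneg hb 8]
  linarith

theorem stmt_6 (n : ℕ) (hn : 1 ≤ n) (t s : Fin n → Bool) (μ : Bool → Bool → ℝ)
    (hμ : ∀ a b, μ a b =
      ((Finset.univ.filter (fun i => t i = a ∧ s i = b)).card : ℝ) / n)
    (we : ℝ) (hw1 : 3 / 4 < we) (hw2 : we ≤ (2 + Real.sqrt 2) / 4)
    (Δ : ℝ)
    (hΔ : Δ = we - 1 / 2 -
      (1 / 4) * (Real.sqrt 2 * μ false false - μ false true + μ true false)) :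
    ∃ γ : ℝ, 0 ≤ γ ∧
      (μ false false * (Real.exp (-γ * we) *
          ((Real.exp γ - 1) * ((2 + Real.sqrt 2) / 4) + 1)) +
       μ true false * (Real.exp (-γ * we) * (3 * Real.exp γ + 1) / 4) +
       μ false true * (Real.exp (-γ * we) * (3 + Real.exp γ) / 4) +
       μ true true * (Real.exp (-γ * we) * (1 + Real.exp γ) / 2)) - 1
      ≤ if 0 ≤ Δ then -Δ ^ 2 else 0 := by
  classical
  have hs0 : 0 ≤ Real.sqrt 2 := Real.sqrt_nonneg 2
  have hs2 : Real.sqrt 2 ^ 2 = 2 := Real.sq_sqrt (by norm_num)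
  have hsub : Real.sqrt 2 ≤ 1.4143 := by nlinarith
  have hwub : we ≤ 0.8536 := by
    have : (2 + Real.sqrt 2) / 4 ≤ 0.8536 := by linarith
    linarith
  -- sum of the μ's is 1
  have hcard : (((Finset.univ.filter (fun i => t i = false ∧ s i = false)).card
      + (Finset.univ.filter (fun i => t i = true ∧ s i = false)).card)
      + (Finset.univ.filter (fun i => t i = false ∧ s i = true)).card)
      + (Finset.univ.filter (fun i => t i = true ∧ s i = true)).card = n := by
    simp only [Finset.card_filter]
    rw [← Finset.sum_add_distrib, ← Finset.sum_add_distrib, ← Finset.sum_add_distrib]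
    have h1 : ∀ i ∈ Finset.univ, ((((if t i = false ∧ s i = false then 1 else 0)
        + (if t i = true ∧ s i = false then 1 else 0))
        + (if t i = false ∧ s i = true then 1 else 0))
        + (if t i = true ∧ s i = true then 1 else 0)) = 1 := by
      intro i _
      cases t i <;> cases s i <;> simp
    rw [Finset.sum_congr rfl h1, Finset.sum_const, Finset.card_univ, Fintype.card_fin,
      smul_eq_mul, mul_one]
  have hn0 : (n:ℝ) ≠ 0 := Nat.cast_ne_zero.2 (by omega)
  have hsum : μ false false + μ true false + μ false true + μ true true = 1 := by
    rw [hμ false false, hμ true false, hμ false true, hμ true true,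
      ← add_div, ← add_div, ← add_div, div_eq_one_iff_eq hn0]
    exact_mod_cast hcard
  have hμpos : ∀ a b, 0 ≤ μ a b := by
    intro a b; rw [hμ]; positivity
  have h00 := hμpos false false
  have h10 := hμpos true false
  have h01 := hμpos false true
  have h11 := hμpos true true
  -- key: A = we - Δ
  have hAeq : (2 + Real.sqrt 2)/4 * μ false false + 3/4 * μ true false
      + 1/4 * μ false true + 1/2 * μ true true = we - Δ := by
    linear_combination hΔ + (1/2) * hsum
  have hs00 : 0 ≤ Real.sqrt 2 * μ false false := mul_nonneg hs0 h00
  have hΔub : Δ ≤ we - 1/4 := by nlinarith [hAeq, hs00, h10, h11]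
  rcases le_or_gt 0 Δ with hpos | hneg
  · -- Δ ≥ 0 : take γ = 3Δ
    refine ⟨3*Δ, by linarith, ?_⟩
    rw [if_pos hpos]
    set X := Real.exp (3*Δ) with hX
    set Y := Real.exp (-(3*Δ) * we) with hY
    have ha0 : 0 ≤ 3*Δ*(1-we) := by nlinarith
    have ha1 : 3*Δ*(1-we) ≤ 1 := by nlinarith
    have hb0 : 0 ≤ 3*Δ*we := by nlinarith
    have hEa : X * Y ≤ 1 + (3*Δ*(1-we)) + (3*Δ*(1-we))^2/2 + (3*Δ*(1-we))^3/2 := by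
      have : X * Y = Real.exp (3*Δ*(1-we)) := by
        rw [hX, hY, ← Real.exp_add]; ring_nf
      rw [this]
      exact exp_cubic_bd ha0 ha1
    have hEb : Y ≤ 1 - (3*Δ*we) + (3*Δ*we)^2/2 - (3*Δ*we)^3/6 + (3*Δ*we)^4/24 := by
      have : Y = Real.exp (-(3*Δ*we)) := by rw [hY]; ring_nf
      rw [this]
      exact exp_neg_quartic_bd hb0
    have key := key_poly we Δ (le_of_lt hw1) hwub hpos hΔub
    have hc1 : (0:ℝ) ≤ we - Δ := by linarith
    have hc2 : (0:ℝ) ≤ 1 - we + Δ := by linarith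
    have m1 : (we - Δ) * (X*Y) ≤ (we - Δ) * (1 + (3*Δ*(1-we)) + (3*Δ*(1-we))^2/2
        + (3*Δ*(1-we))^3/2) := mul_le_mul_of_nonneg_left hEa hc1
    have m2 : (1 - we + Δ) * Y ≤ (1 - we + Δ) * (1 - (3*Δ*we) + (3*Δ*we)^2/2
        - (3*Δ*we)^3/6 + (3*Δ*we)^4/24) := mul_le_mul_of_nonneg_left hEb hc2
    have hexpr : (μ false false * (Y * ((X - 1) * ((2 + Real.sqrt 2) / 4) + 1)) +
       μ true false * (Y * (3 * X + 1) / 4) +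
       μ false true * (Y * (3 + X) / 4) +
       μ true true * (Y * (1 + X) / 2))
       = (we - Δ) * (X*Y) + (1 - we + Δ) * Y := by
      linear_combination (X*Y - Y) * hAeq + Y * hsum
    rw [hexpr]
    linarith [m1, m2, key]
  · -- Δ < 0 : take γ = 0
    refine ⟨0, le_refl 0, ?_⟩
    rw [if_neg (not_le.2 hneg)]
    simp only [neg_zero, zero_mul, Real.exp_zero]
    linarith [hsum]
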